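/- Let any (3; N_1, N_2, K_d, K) exact-repair MLD-R code (n = 3 nodes, d = 2 messages) be given. Then log K_d + log K ≥ (3/2)·log N_1 + log N_2. -/

import Mathlib

/-- An `(n; N₁, …, N_{n-1}, K_d, K)` exact-repair MLD-R code with `n` storage nodes and
`d = n - 1` independent messages, where message `k` (0-indexed) takes values in
`Fin (N k)`, each node stores an element of `Fin Kd`, and each repair message is an
element of `Fin K`. -/
structure MLDRCode (n : ℕ) (N : Fin (n - 1) → ℕ) (Kd K : ℕ) where
  /-- node encoders: node `i` stores `enc i m` -/
  enc : Fin n → ((k : Fin (n - 1)) → Fin (N k)) → Fin Kd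
  /-- decoders: from the contents stored on the nodes in `A`, produce messages
  (only the first `|A|` of them are required to be correct) -/
  dec : (A : Finset (Fin n)) → ((i : A) → Fin Kd) → ((k : Fin (n - 1)) → Fin (N k))
  /-- repair encoders: helper node `i` sends `repEnc i j w` to the failed node `j`,
  where `w` is the content stored on node `i` -/
  repEnc : Fin n → Fin n → Fin Kd → Fin K
  /-- repair decoders: the failed node `j` regenerates its content from the repair
  messages sent by the other `n - 1` nodes -/
  repDec : (j : Fin n) → ((i : {i : Fin n // i ≠ j}) → Fin K) → Fin Kd
  /-- reconstruction condition: any nonempty set `A` of at most `n - 1` nodes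
  recovers the first `|A|` messages -/
  reconstruct : ∀ (A : Finset (Fin n)), A.Nonempty → A.card ≤ n - 1 →
    ∀ m : (k : Fin (n - 1)) → Fin (N k), ∀ k : Fin (n - 1), (k : ℕ) < A.card →
      dec A (fun i => enc i.1 m) k = m k
  /-- exact repair condition -/
  repair : ∀ (j : Fin n), ∀ m : (k : Fin (n - 1)) → Fin (N k),
      repDec j (fun i => repEnc i.1 j (enc i.1 m)) = enc j m

namespace MLDR3Aux


def E (N1 N2 : ℕ) (x : Fin N1) (y : Fin N2) : (k : Fin (3-1)) → Fin (![N1,N2] k) :=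
  Fin.cons x (Fin.cons y (fun i => i.elim0))

variable {N1 N2 Kd K : ℕ} (C : MLDRCode 3 ![N1, N2] Kd K)

-- (see t2 lemmas, inserted below)
open Finset in
lemma holder_nat (N1 N2 A B Cc : ℕ) (hN1 : 0 < N1) (hA : 0 < A) (hB : 0 < B) (hC : 0 < Cc)
    (a b c : Fin N1 → ℕ)
    (ha : ∑ x, a x ≤ A) (hb : ∑ x, b x ≤ B) (hc : ∑ x, c x ≤ Cc)
    (h : ∀ x, N2 ^ 2 ≤ a x * b x * c x) :
    N1 ^ 3 * N2 ^ 2 ≤ A * B * Cc := by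
  have hA' : (0:ℝ) < A := by exact_mod_cast hA
  have hB' : (0:ℝ) < B := by exact_mod_cast hB
  have hC' : (0:ℝ) < Cc := by exact_mod_cast hC
  have hN1' : (0:ℝ) < N1 := by exact_mod_cast hN1
  set T : ℝ := (A:ℝ) * B * Cc with hT
  have hT' : 0 < T := by positivity
  set q : ℝ := ((N2:ℝ) ^ 2 / T) ^ ((3:ℝ)⁻¹) with hq
  have term : ∀ x : Fin N1, q ≤ (1/3) * ((a x : ℝ)/A) + (1/3) * ((b x : ℝ)/B)
      + (1/3) * ((c x : ℝ)/Cc) := by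
    intro x
    have habc : ((N2:ℝ)^2) ≤ ((a x : ℝ) * b x * c x) := by exact_mod_cast h x
    have h1 : q ≤ (((a x : ℝ) * b x * c x) / T) ^ ((3:ℝ)⁻¹) := by
      apply Real.rpow_le_rpow (by positivity) _ (by norm_num)
      gcongr
    have h2 : (((a x : ℝ) * b x * c x) / T) ^ ((3:ℝ)⁻¹)
        = ((a x : ℝ)/A) ^ ((3:ℝ)⁻¹) * ((b x : ℝ)/B) ^ ((3:ℝ)⁻¹) * ((c x : ℝ)/Cc) ^ ((3:ℝ)⁻¹) := by
      rw [← Real.mul_rpow (by positivity) (by positivity),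
        ← Real.mul_rpow (by positivity) (by positivity)]
      congr 1
      field_simp
      rw [hT]; ring
    have h3 := Real.geom_mean_le_arith_mean3_weighted (by norm_num : (0:ℝ) ≤ 1/3)
      (by norm_num : (0:ℝ) ≤ 1/3) (by norm_num : (0:ℝ) ≤ 1/3)
      (by positivity : (0:ℝ) ≤ (a x : ℝ)/A) (by positivity : (0:ℝ) ≤ (b x : ℝ)/B)
      (by positivity : (0:ℝ) ≤ (c x : ℝ)/Cc) (by norm_num)
    calc q ≤ _ := h1
      _ = _ := h2
      _ ≤ _ := by
        simpa [one_div] using h3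
  have hsum : (N1:ℝ) * q ≤ 1 := by
    have h4 : ∑ _x : Fin N1, q ≤ ∑ x : Fin N1,
        ((1/3) * ((a x : ℝ)/A) + (1/3) * ((b x : ℝ)/B) + (1/3) * ((c x : ℝ)/Cc)) :=
      Finset.sum_le_sum fun x _ => term x
    rw [Finset.sum_const, card_univ, Fintype.card_fin, nsmul_eq_mul] at h4
    have h5 : ∑ x : Fin N1, ((1/3) * ((a x : ℝ)/A) + (1/3) * ((b x : ℝ)/B)
        + (1/3) * ((c x : ℝ)/Cc)) ≤ 1 := by
      have e : ∀ (D : ℕ) (d : Fin N1 → ℕ), 0 < D → (∑ x, d x ≤ D) →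
          ∑ x : Fin N1, ((d x : ℝ)/D) ≤ 1 := by
        intro D d hD hd
        rw [← Finset.sum_div, div_le_one (by exact_mod_cast hD)]
        exact_mod_cast hd
      have := e A a hA ha
      have := e B b hB hb
      have := e Cc c hC hc
      rw [Finset.sum_add_distrib, Finset.sum_add_distrib, ← Finset.mul_sum, ← Finset.mul_sum,
        ← Finset.mul_sum]
      linarith
    linarith
  -- now cube
  have hq0 : 0 ≤ q := Real.rpow_nonneg (by positivity) _
  have h6 : q ≤ 1 / N1 := by
    rw [le_div_iff₀ hN1'] ; linarith [hsum]
  have h7 : q ^ (3:ℕ) ≤ (1 / N1) ^ (3:ℕ) := pow_le_pow_left₀ hq0 h6 3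
  have h8 : q ^ (3:ℕ) = (N2:ℝ)^2 / T := by
    rw [hq, ← Real.rpow_natCast (((N2:ℝ)^2/T) ^ ((3:ℝ)⁻¹)) 3, ← Real.rpow_mul (by positivity)]
    norm_num
  rw [h8] at h7
  have h7' : (N2:ℝ)^2 / T ≤ 1 / (N1:ℝ)^3 := by rw [← one_div_pow]; exact h7
  rw [div_le_div_iff₀ hT' (by positivity : (0:ℝ) < (N1:ℝ)^3)] at h7'
  have h9 : (N1:ℝ)^3 * ((N2:ℝ)^2) ≤ T := by nlinarith [h7']
  have : ((N1^3 * N2^2 : ℕ) : ℝ) ≤ ((A * B * Cc : ℕ) : ℝ) := by push_cast; linarith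
  exact_mod_cast this



lemma dec_single (i : Fin 3) (m m' : (k : Fin (3-1)) → Fin (![N1,N2] k))
    (h : C.enc i m = C.enc i m') : m 0 = m' 0 := by
  have key : ∀ mm : (k : Fin (3-1)) → Fin (![N1,N2] k),
      C.dec {i} (fun j => C.enc j.1 mm) 0 = mm 0 :=
    fun mm => C.reconstruct {i} (Finset.singleton_nonempty i) (by simp) mm 0 (by simp)
  have hf : (fun j : ({i} : Finset (Fin 3)) => C.enc j.1 m)
      = (fun j : ({i} : Finset (Fin 3)) => C.enc j.1 m') := by
    funext j
    have hj : j.1 = i := Finset.mem_singleton.mp j.2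
    rw [hj, h]
  calc m 0 = C.dec {i} (fun j => C.enc j.1 m) 0 := (key m).symm
    _ = C.dec {i} (fun j => C.enc j.1 m') 0 := by rw [hf]
    _ = m' 0 := key m'

lemma dec_pair (i j : Fin 3) (hij : i ≠ j) (m m' : (k : Fin (3-1)) → Fin (![N1,N2] k))
    (h1 : C.enc i m = C.enc i m') (h2 : C.enc j m = C.enc j m') : m = m' := by
  have hcard : ({i, j} : Finset (Fin 3)).card = 2 := Finset.card_pair hij
  have key : ∀ mm : (k : Fin (3-1)) → Fin (![N1,N2] k), ∀ k : Fin (3-1),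
      C.dec {i, j} (fun l => C.enc l.1 mm) k = mm k :=
    fun mm k => C.reconstruct {i, j} ⟨i, by simp⟩ (by rw [hcard]) mm k
      (by rw [hcard]; exact k.isLt)
  have hf : (fun l : ({i, j} : Finset (Fin 3)) => C.enc l.1 m)
      = (fun l : ({i, j} : Finset (Fin 3)) => C.enc l.1 m') := by
    funext l
    rcases Finset.mem_insert.mp l.2 with hl | hl
    · rw [hl, h1]
    · rw [Finset.mem_singleton.mp hl, h2]
  funext k
  calc m k = C.dec {i, j} (fun l => C.enc l.1 m) k := (key m k).symm
    _ = C.dec {i, j} (fun l => C.enc l.1 m') k := by rw [hf]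
    _ = m' k := key m' k

lemma rep2 (m m' : (k : Fin (3-1)) → Fin (![N1,N2] k))
    (h0 : C.repEnc 0 2 (C.enc 0 m) = C.repEnc 0 2 (C.enc 0 m'))
    (h1 : C.repEnc 1 2 (C.enc 1 m) = C.repEnc 1 2 (C.enc 1 m')) :
    C.enc 2 m = C.enc 2 m' := by
  have hf : (fun i : {i : Fin 3 // i ≠ 2} => C.repEnc i.1 2 (C.enc i.1 m))
      = (fun i : {i : Fin 3 // i ≠ 2} => C.repEnc i.1 2 (C.enc i.1 m')) := by
    funext i
    obtain ⟨i, hi⟩ := i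
    fin_cases i
    · exact h0
    · exact h1
    · simp at hi
  calc C.enc 2 m = C.repDec 2 (fun i => C.repEnc i.1 2 (C.enc i.1 m)) := (C.repair 2 m).symm
    _ = C.repDec 2 (fun i => C.repEnc i.1 2 (C.enc i.1 m')) := by rw [hf]
    _ = C.enc 2 m' := C.repair 2 m'



include C in
theorem main (hN1 : 0 < N1) (hN2 : 0 < N2) (hKd : 0 < Kd) (hK : 0 < K) :
    N1 ^ 3 * N2 ^ 2 ≤ (Kd * Kd) * (K * K) := by
  classical
  set W0 : Fin N1 → Fin N2 → Fin Kd := fun x y => C.enc 0 (E N1 N2 x y) with hW0def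
  set W1 : Fin N1 → Fin N2 → Fin Kd := fun x y => C.enc 1 (E N1 N2 x y) with hW1def
  set W2 : Fin N1 → Fin N2 → Fin Kd := fun x y => C.enc 2 (E N1 N2 x y) with hW2def
  set S0 : Fin N1 → Fin N2 → Fin K := fun x y => C.repEnc 0 2 (W0 x y) with hS0def
  set S1 : Fin N1 → Fin N2 → Fin K := fun x y => C.repEnc 1 2 (W1 x y) with hS1def
  set u : Fin N1 → Fin N2 → Fin K × Fin K := fun x y => (S0 x y, S1 x y) with hudef
  -- basic decoding facts
  have hx0 : ∀ {x y x' y'}, W0 x y = W0 x' y' → x = x' := by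
    intro x y x' y' h
    exact dec_single C 0 (E N1 N2 x y) (E N1 N2 x' y') h
  have hx2 : ∀ {x y x' y'}, W2 x y = W2 x' y' → x = x' := by
    intro x y x' y' h
    exact dec_single C 2 (E N1 N2 x y) (E N1 N2 x' y') h
  have hp02 : ∀ {x y y'}, W0 x y = W0 x y' → W2 x y = W2 x y' → y = y' := by
    intro x y y' h1 h2
    have := dec_pair C 0 2 (by decide) (E N1 N2 x y) (E N1 N2 x y') h1 h2
    exact congrFun this 1
  have hp12 : ∀ {x y y'}, W1 x y = W1 x y' → W2 x y = W2 x y' → y = y' := by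
    intro x y y' h1 h2
    have := dec_pair C 1 2 (by decide) (E N1 N2 x y) (E N1 N2 x y') h1 h2
    exact congrFun this 1
  have hrep : ∀ {x y x' y'}, S0 x y = S0 x' y' → S1 x y = S1 x' y' → W2 x y = W2 x' y' := by
    intro x y x' y' h1 h2
    exact rep2 C (E N1 N2 x y) (E N1 N2 x' y') h1 h2
  -- finsets
  set A : Fin N1 → Finset (Fin Kd) := fun x => Finset.image (fun y => W0 x y) Finset.univ with hAdef
  set B : Fin N1 → Finset (Fin Kd) := fun x => Finset.image (fun y => W1 x y) Finset.univ with hBdef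
  set Cx : Fin N1 → Finset (Fin K × Fin K) := fun x => Finset.image (fun y => u x y) Finset.univ
    with hCxdef
  have ha : ∑ x, (A x).card ≤ Kd := by
    have hdisj : ∀ x ∈ (Finset.univ : Finset (Fin N1)), ∀ x' ∈ Finset.univ, x ≠ x' →
        Disjoint (A x) (A x') := by
      intro x _ x' _ hxx
      rw [Finset.disjoint_left]
      intro w hw hw'
      obtain ⟨y, _, hy⟩ := Finset.mem_image.mp hw
      obtain ⟨y', _, hy'⟩ := Finset.mem_image.mp hw'
      exact hxx (hx0 (hy.trans hy'.symm))
    calc ∑ x, (A x).card = (Finset.univ.biUnion A).card := (Finset.card_biUnion hdisj).symm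
      _ ≤ Fintype.card (Fin Kd) := Finset.card_le_univ _
      _ = Kd := Fintype.card_fin _
  have hb : ∑ x, (B x).card ≤ Kd := by
    have hdisj : ∀ x ∈ (Finset.univ : Finset (Fin N1)), ∀ x' ∈ Finset.univ, x ≠ x' →
        Disjoint (B x) (B x') := by
      intro x _ x' _ hxx
      rw [Finset.disjoint_left]
      intro w hw hw'
      obtain ⟨y, _, hy⟩ := Finset.mem_image.mp hw
      obtain ⟨y', _, hy'⟩ := Finset.mem_image.mp hw'
      exact hxx (dec_single C 1 (E N1 N2 x y) (E N1 N2 x' y') (hy.trans hy'.symm))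
    calc ∑ x, (B x).card = (Finset.univ.biUnion B).card := (Finset.card_biUnion hdisj).symm
      _ ≤ Fintype.card (Fin Kd) := Finset.card_le_univ _
      _ = Kd := Fintype.card_fin _
  have hc : ∑ x, (Cx x).card ≤ K * K := by
    have hdisj : ∀ x ∈ (Finset.univ : Finset (Fin N1)), ∀ x' ∈ Finset.univ, x ≠ x' →
        Disjoint (Cx x) (Cx x') := by
      intro x _ x' _ hxx
      rw [Finset.disjoint_left]
      intro w hw hw'
      obtain ⟨y, _, hy⟩ := Finset.mem_image.mp hw
      obtain ⟨y', _, hy'⟩ := Finset.mem_image.mp hw'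
      have huu : u x y = u x' y' := hy.trans hy'.symm
      have h0 : S0 x y = S0 x' y' := congrArg Prod.fst huu
      have h1 : S1 x y = S1 x' y' := congrArg Prod.snd huu
      exact hxx (hx2 (hrep h0 h1))
    calc ∑ x, (Cx x).card = (Finset.univ.biUnion Cx).card := (Finset.card_biUnion hdisj).symm
      _ ≤ Fintype.card (Fin K × Fin K) := Finset.card_le_univ _
      _ = K * K := by simp
  have hF4 : ∀ x, N2 ^ 2 ≤ (A x).card * (B x).card * (Cx x).card := by
    intro x
    set fib : Fin K × Fin K → Finset (Fin N2) :=
      fun z => Finset.univ.filter (fun y => u x y = z) with hfibdef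
    have h1 : N2 = ∑ z ∈ Cx x, (fib z).card := by
      have := Finset.card_eq_sum_card_image (fun y => u x y) (Finset.univ : Finset (Fin N2))
      simpa using this
    have hCS : (N2:ℕ) ^ 2 ≤ (Cx x).card * ∑ z ∈ Cx x, (fib z).card ^ 2 := by
      have := Finset.sum_mul_sq_le_sq_mul_sq (Cx x) (fun _ => (1:ℕ)) (fun z => (fib z).card)
      simpa [h1] using this
    have hsq : ∑ z ∈ Cx x, (fib z).card ^ 2 ≤ (A x).card * (B x).card := by
      set P : Finset (Fin N2 × Fin N2) :=
        Finset.univ.filter (fun p => u x p.1 = u x p.2) with hPdef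
      have hdisj2 : ∀ z ∈ Cx x, ∀ z' ∈ Cx x, z ≠ z' →
          Disjoint (fib z ×ˢ fib z) (fib z' ×ˢ fib z') := by
        intro z _ z' _ hzz
        rw [Finset.disjoint_left]
        intro p hp hp'
        have h1 := (Finset.mem_filter.mp (Finset.mem_product.mp hp).1).2
        have h2 := (Finset.mem_filter.mp (Finset.mem_product.mp hp').1).2
        exact hzz (h1.symm.trans h2)
      have e2 : ∑ z ∈ Cx x, (fib z).card ^ 2 = ((Cx x).biUnion (fun z => fib z ×ˢ fib z)).card := by
        rw [Finset.card_biUnion hdisj2]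
        refine Finset.sum_congr rfl fun z _ => ?_
        rw [Finset.card_product, sq]
      have e3 : (Cx x).biUnion (fun z => fib z ×ˢ fib z) ⊆ P := by
        intro p hp
        obtain ⟨z, _, hz⟩ := Finset.mem_biUnion.mp hp
        have h1 := (Finset.mem_filter.mp (Finset.mem_product.mp hz).1).2
        have h2 := (Finset.mem_filter.mp (Finset.mem_product.mp hz).2).2
        exact Finset.mem_filter.mpr ⟨Finset.mem_univ _, h1.trans h2.symm⟩
      have e4 : P.card ≤ ((A x) ×ˢ (B x)).card := by
        apply Finset.card_le_card_of_injOn (fun p => (W0 x p.1, W1 x p.2))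
        · intro p hp
          exact Finset.mem_product.mpr
            ⟨Finset.mem_image.mpr ⟨p.1, Finset.mem_univ _, rfl⟩,
             Finset.mem_image.mpr ⟨p.2, Finset.mem_univ _, rfl⟩⟩
        · intro p hp q hq heq
          have hpu : u x p.1 = u x p.2 := (Finset.mem_filter.mp hp).2
          have hqu : u x q.1 = u x q.2 := (Finset.mem_filter.mp hq).2
          have hW0 : W0 x p.1 = W0 x q.1 := congrArg Prod.fst heq
          have hW1 : W1 x p.2 = W1 x q.2 := congrArg Prod.snd heq
          have hS0pq : S0 x p.1 = S0 x q.1 := congrArg (C.repEnc 0 2) hW0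
          have hpS0 : S0 x p.1 = S0 x p.2 := congrArg Prod.fst hpu
          have hpS1 : S1 x p.1 = S1 x p.2 := congrArg Prod.snd hpu
          have hqS0 : S0 x q.1 = S0 x q.2 := congrArg Prod.fst hqu
          have hqS1 : S1 x q.1 = S1 x q.2 := congrArg Prod.snd hqu
          have hS1' : S1 x p.2 = S1 x q.2 := congrArg (C.repEnc 1 2) hW1
          have hS1pq : S1 x p.1 = S1 x q.1 := hpS1.trans (hS1'.trans hqS1.symm)
          have hW2pq : W2 x p.1 = W2 x q.1 := hrep hS0pq hS1pq
          have h11 : p.1 = q.1 := hp02 hW0 hW2pq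
          have hW2p : W2 x p.1 = W2 x p.2 := hrep hpS0 hpS1
          have hW2q : W2 x q.1 = W2 x q.2 := hrep hqS0 hqS1
          have hW2' : W2 x p.2 = W2 x q.2 := hW2p.symm.trans (hW2pq.trans hW2q)
          have h22 : p.2 = q.2 := hp12 hW1 hW2'
          exact Prod.ext h11 h22
      calc ∑ z ∈ Cx x, (fib z).card ^ 2 = ((Cx x).biUnion (fun z => fib z ×ˢ fib z)).card := e2
        _ ≤ P.card := Finset.card_le_card e3
        _ ≤ ((A x) ×ˢ (B x)).card := e4
        _ = (A x).card * (B x).card := Finset.card_product _ _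
    calc N2 ^ 2 ≤ (Cx x).card * ∑ z ∈ Cx x, (fib z).card ^ 2 := hCS
      _ ≤ (Cx x).card * ((A x).card * (B x).card) := Nat.mul_le_mul_left _ hsq
      _ = (A x).card * (B x).card * (Cx x).card := by ring
  exact holder_nat N1 N2 Kd Kd (K*K) hN1 hKd hKd (Nat.mul_pos hK hK)
    (fun x => (A x).card) (fun x => (B x).card) (fun x => (Cx x).card) ha hb hc hF4

end MLDR3Aux

/-- **(n = 3) sum bound.** For any `(3; N₁, N₂, K_d, K)` exact-repair MLD-R code,
`log K_d + log K ≥ (3/2)·log N₁ + log N₂`. -/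
theorem mldr3_alpha_beta_bound (N1 N2 Kd K : ℕ) (hN1 : 0 < N1) (hN2 : 0 < N2)
    (hKd : 0 < Kd) (hK : 0 < K)
    (C : MLDRCode 3 ![N1, N2] Kd K) :
    Real.log Kd + Real.log K ≥ (3 / 2) * Real.log N1 + Real.log N2 := by
  have hnat := MLDR3Aux.main C hN1 hN2 hKd hK
  have hcast : ((N1 ^ 3 * N2 ^ 2 : ℕ) : ℝ) ≤ ((Kd * Kd * (K * K) : ℕ) : ℝ) := by
    exact_mod_cast hnat
  have hpos : (0:ℝ) < ((N1 ^ 3 * N2 ^ 2 : ℕ) : ℝ) := by positivity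
  have hlog := Real.log_le_log hpos hcast
  have e1 : Real.log ((N1 ^ 3 * N2 ^ 2 : ℕ) : ℝ)
      = 3 * Real.log N1 + 2 * Real.log N2 := by
    push_cast
    rw [Real.log_mul (by positivity) (by positivity), Real.log_pow, Real.log_pow]
    push_cast
    ring
  have e2 : Real.log ((Kd * Kd * (K * K) : ℕ) : ℝ)
      = 2 * Real.log Kd + 2 * Real.log K := by
    push_cast
    rw [Real.log_mul (by positivity) (by positivity),
      Real.log_mul (by positivity) (by positivity),
      Real.log_mul (by positivity) (by positivity)]
    ring
  rw [e1, e2] at hlog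
  linarith
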